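/- Let S be an amiable semigroup which avoids M and let a, b ∈ S be idempotents with ab ≠ ba. Then the elements (ab)^m (m ≥ 1), (ba)^m (m ≥ 1), (ab)^n a (n ≥ 0, with (ab)^0 a = a), and (ba)^n b (n ≥ 0, with (ba)^0 b = b) are all pairwise distinct. Consequently the subsemigroup of S generated by a and b is infinite and is isomorphic to the semigroup F presented by ⟨a, b | a² = a, b² = b⟩. -/

import Mathlib

/-- The starred Green relation `𝓛*` on a semigroup `S`: `x 𝓛* y` iff for all
`u v ∈ S¹` (realized as `WithOne S`), `xu = xv ↔ yu = yv`. -/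
def LStar {S : Type*} [Semigroup S] (x y : S) : Prop :=
  ∀ u v : WithOne S,
    ((x : WithOne S) * u = (x : WithOne S) * v ↔ (y : WithOne S) * u = (y : WithOne S) * v)

/-- The starred Green relation `𝓡*` on a semigroup `S`: `x 𝓡* y` iff for all
`u v ∈ S¹` (realized as `WithOne S`), `ux = vx ↔ uy = vy`. -/
def RStar {S : Type*} [Semigroup S] (x y : S) : Prop :=
  ∀ u v : WithOne S,
    (u * (x : WithOne S) = v * (x : WithOne S) ↔ u * (y : WithOne S) = v * (y : WithOne S))

/-- A semigroup is amiable if each `𝓛*`-class and each `𝓡*`-class contains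
exactly one idempotent. -/
def IsAmiable (S : Type*) [Semigroup S] : Prop :=
  (∀ x : S, ∃! e : S, e * e = e ∧ LStar x e) ∧
  (∀ x : S, ∃! e : S, e * e = e ∧ RStar x e)

/-- A semigroup `S` avoids `M` iff it contains no four pairwise distinct elements
realizing the multiplication table of the four-element semigroup `M`. -/
def AvoidsM (S : Type*) [Semigroup S] : Prop :=
  ¬ ∃ a b c d : S,
      (a ≠ b ∧ a ≠ c ∧ a ≠ d ∧ b ≠ c ∧ b ≠ d ∧ c ≠ d) ∧
      a * a = a ∧ a * b = c ∧ a * c = c ∧ a * d = c ∧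
      b * a = d ∧ b * b = b ∧ b * c = c ∧ b * d = d ∧
      c * a = c ∧ c * b = c ∧ c * c = c ∧ c * d = c ∧
      d * a = d ∧ d * b = c ∧ d * c = c ∧ d * d = c

/-- `ABm a b n = (a*b)^(n+1)`; as `n` ranges over `ℕ` this gives the powers
`(ab)^m` for all `m ≥ 1`. -/
def ABm {S : Type*} [Mul S] (a b : S) : ℕ → S
  | 0 => a * b
  | n + 1 => (a * b) * ABm a b n

/-- `ABa a b n = (a*b)^n * a`, with the convention `(a*b)^0 * a = a`. -/
def ABa {S : Type*} [Mul S] (a b : S) : ℕ → S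
  | 0 => a
  | n + 1 => (a * b) * ABa a b n

namespace GenF

variable {S : Type*} [Semigroup S]

theorem lstar_self (x : S) : LStar x x := fun _ _ => Iff.rfl
theorem rstar_self (x : S) : RStar x x := fun _ _ => Iff.rfl

theorem idem_L_eq (hS : IsAmiable S) {p q : S} (hp : p*p = p) (hq : q*q = q)
    (hpq : p*q = p) (hqp : q*p = q) : p = q := by
  have hL : LStar p q := by
    intro u v
    constructor
    · intro h
      have hq' : (q : WithOne S) = (q : WithOne S) * p := by
        rw [← WithOne.coe_mul, hqp]
      calc (q : WithOne S) * u = ↑q * (↑p * u) := by rw [← mul_assoc, ← hq']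
        _ = ↑q * (↑p * v) := by rw [h]
        _ = ↑q * v := by rw [← mul_assoc, ← hq']
    · intro h
      have hp' : (p : WithOne S) = (p : WithOne S) * q := by
        rw [← WithOne.coe_mul, hpq]
      calc (p : WithOne S) * u = ↑p * (↑q * u) := by rw [← mul_assoc, ← hp']
        _ = ↑p * (↑q * v) := by rw [h]
        _ = ↑p * v := by rw [← mul_assoc, ← hp']
  obtain ⟨e, -, hu⟩ := hS.1 p
  exact (hu p ⟨hp, lstar_self p⟩).trans (hu q ⟨hq, hL⟩).symm

theorem idem_R_eq (hS : IsAmiable S) {p q : S} (hp : p*p = p) (hq : q*q = q)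
    (hpq : p*q = q) (hqp : q*p = p) : p = q := by
  have hR : RStar p q := by
    intro u v
    constructor
    · intro h
      have hq' : (q : WithOne S) = (p : WithOne S) * q := by
        rw [← WithOne.coe_mul, hpq]
      calc u * (q : WithOne S) = (u * ↑p) * ↑q := by rw [mul_assoc, ← hq']
        _ = (v * ↑p) * ↑q := by rw [h]
        _ = v * ↑q := by rw [mul_assoc, ← hq']
    · intro h
      have hp' : (p : WithOne S) = (q : WithOne S) * p := by
        rw [← WithOne.coe_mul, hqp]
      calc u * (p : WithOne S) = (u * ↑q) * ↑p := by rw [mul_assoc, ← hp']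
        _ = (v * ↑q) * ↑p := by rw [h]
        _ = v * ↑p := by rw [mul_assoc, ← hp']
  obtain ⟨e, -, hu⟩ := hS.2 p
  exact (hu p ⟨hp, rstar_self p⟩).trans (hu q ⟨hq, hR⟩).symm

/-- For idempotents, right absorption implies left absorption. -/
theorem absorb_swap (hS : IsAmiable S) {p α : S} (hp : p*p = p)
    (h : p*α = p) : α*p = p := by
  have h1 : p*(α*p) = p := by rw [← mul_assoc, h, hp]
  have hg : (α*p)*(α*p) = α*p := by rw [mul_assoc, h1]
  have hgp : (α*p)*p = α*p := by rw [mul_assoc, hp]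
  exact (idem_L_eq hS hp hg h1 hgp).symm

/-- idempotent e with a*e = e gives e*a = e -/
theorem ea_of (hS : IsAmiable S) {e a : S} (he : e*e = e) (hae : a*e = e) : e*a = e := by
  have hq : (e*a)*(e*a) = e*a := by
    rw [mul_assoc, ← mul_assoc a, hae, ← mul_assoc, he]
  have hpq : e*(e*a) = e*a := by rw [← mul_assoc, he]
  have hqp : (e*a)*e = e := by rw [mul_assoc, hae, he]
  exact (idem_R_eq hS he hq hpq hqp).symm

/-- idempotent e with e*b = e gives b*e = e -/
theorem be_of (hS : IsAmiable S) {e b : S} (he : e*e = e) (heb : e*b = e) : b*e = e := by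
  have hq : (b*e)*(b*e) = b*e := by
    rw [mul_assoc, ← mul_assoc e, heb, he]
  have hpq : e*(b*e) = e := by rw [← mul_assoc, heb, he]
  have hqp : (b*e)*e = b*e := by rw [mul_assoc, he]
  exact (idem_L_eq hS he hq hpq hqp).symm

theorem lstar_iff {z η : S} (hL : LStar z η) (u v : S) : z*u = z*v ↔ η*u = η*v := by
  have h := hL u v
  rw [← WithOne.coe_mul, ← WithOne.coe_mul, ← WithOne.coe_mul, ← WithOne.coe_mul,
      WithOne.coe_inj, WithOne.coe_inj] at h
  exact h

theorem lstar_one {z η : S} (hL : LStar z η) (u : S) : z*u = z ↔ η*u = η := by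
  have h := hL u 1
  rw [mul_one, mul_one, ← WithOne.coe_mul, ← WithOne.coe_mul,
      WithOne.coe_inj, WithOne.coe_inj] at h
  exact h

section Words

variable {a b : S} (ha : a*a = a) (hb : b*b = b)

theorem wm_succ (n : ℕ) : ABm a b (n+1) = (a*b) * ABm a b n := rfl

theorem wa_succ (n : ℕ) : ABa a b (n+1) = (a*b) * ABa a b n := rfl

include ha in
theorem wm_a (n : ℕ) : a * ABm a b n = ABm a b n := by
  induction n with
  | zero => show a*(a*b) = a*b; rw [← mul_assoc, ha]
  | succ n _ => show a*((a*b) * ABm a b n) = (a*b) * ABm a b n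
                rw [← mul_assoc, ← mul_assoc, ha]

include hb in
theorem wm_b (n : ℕ) : ABm a b n * b = ABm a b n := by
  induction n with
  | zero => show (a*b)*b = a*b; rw [mul_assoc, hb]
  | succ n ih => show ((a*b) * ABm a b n)*b = (a*b) * ABm a b n
                 rw [mul_assoc, ih]

theorem wm_add (m n : ℕ) : ABm a b (m+n+1) = ABm a b m * ABm a b n := by
  induction m with
  | zero => rw [Nat.zero_add]; rfl
  | succ m ih =>
      have h1 : m+1+n+1 = (m+n+1)+1 := by omega
      rw [h1]
      show (a*b) * ABm a b (m+n+1) = ((a*b) * ABm a b m) * ABm a b n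
      rw [ih, ← mul_assoc]

theorem wm_mul_a (n : ℕ) : ABm a b n * a = ABa a b (n+1) := by
  induction n with
  | zero => rfl
  | succ n ih => rw [wm_succ, wa_succ, mul_assoc, ih]

theorem wa_mul_b (n : ℕ) : ABa a b n * b = ABm a b n := by
  induction n with
  | zero => rfl
  | succ n ih => rw [wa_succ, wm_succ, mul_assoc, ih]

include ha in
theorem wa_a (n : ℕ) : ABa a b n * a = ABa a b n := by
  induction n with
  | zero => exact ha
  | succ n ih => rw [wa_succ, mul_assoc, ih]

include ha in
theorem wa_head_a (n : ℕ) : a * ABa a b n = ABa a b n := by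
  induction n with
  | zero => exact ha
  | succ n _ => show a*((a*b) * ABa a b n) = (a*b) * ABa a b n
                rw [← mul_assoc, ← mul_assoc, ha]

theorem b_mul_wm (n : ℕ) : b * ABm a b n = ABa b a (n+1) := by
  induction n with
  | zero => exact (mul_assoc b a b).symm
  | succ n ih =>
      show b*((a*b) * ABm a b n) = (b*a) * ABa b a (n+1)
      rw [← ih, ← mul_assoc, ← mul_assoc b a b, mul_assoc]

theorem a_mul_wa_ba (n : ℕ) : a * ABa b a n = ABm a b n := by
  induction n with
  | zero => rfl
  | succ n ih =>
      show a*((b*a) * ABa b a n) = (a*b) * ABm a b n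
      rw [← ih, ← mul_assoc, ← mul_assoc a b a, mul_assoc]

theorem a_mul_wm_ba (n : ℕ) : a * ABm b a n = ABa a b (n+1) := by
  induction n with
  | zero => exact (mul_assoc a b a).symm
  | succ n ih =>
      show a*((b*a) * ABm b a n) = (a*b) * ABa a b (n+1)
      rw [← ih, ← mul_assoc, ← mul_assoc a b a, mul_assoc]

include ha in
theorem wa_mul_wa (m n : ℕ) : ABa a b m * ABa a b (n+1) = ABa a b (m+n+1) := by
  induction m with
  | zero => rw [Nat.zero_add]; exact wa_head_a ha (n+1)
  | succ m ih =>
      have h1 : m+1+n+1 = (m+n+1)+1 := by omega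
      rw [h1]
      show ((a*b) * ABa a b m) * ABa a b (n+1) = (a*b) * ABa a b (m+n+1)
      rw [mul_assoc, ih]

theorem wm_succ_r (n : ℕ) : ABm a b (n+1) = ABm a b n * (a*b) := by
  induction n with
  | zero => rfl
  | succ n ih => calc ABm a b (n+2) = (a*b) * ABm a b (n+1) := rfl
      _ = (a*b) * (ABm a b n * (a*b)) := by rw [ih]
      _ = ((a*b) * ABm a b n) * (a*b) := (mul_assoc _ _ _).symm
      _ = ABm a b (n+1) * (a*b) := rfl

end Words


theorem quad (hM : AvoidsM S) {A B C : S} (hA : A*A = A) (hB : B*B = B) (hAB : A*B = C)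
    (hAC : A*C = C) (hCA : C*A = C) (hBC : B*C = C) (hCB : C*B = C) (hCC : C*C = C) :
    A = B ∨ A = C ∨ A = B*A ∨ B = C ∨ B = B*A ∨ C = B*A := by
  by_contra hcon
  push_neg at hcon
  obtain ⟨n1, n2, n3, n4, n5, n6⟩ := hcon
  exact hM ⟨A, B, C, B*A, ⟨n1, n2, n3, n4, n5, n6⟩,
    hA, hAB, hAC, (by rw [← mul_assoc, hAB, hCA]),
    rfl, hB, hBC, (by rw [← mul_assoc, hB]),
    hCA, hCB, hCC, (by rw [← mul_assoc, hCB, hCA]),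
    (by rw [mul_assoc, hA]), (by rw [mul_assoc, hAB, hBC]),
    (by rw [mul_assoc, hAC, hBC]),
    (by rw [mul_assoc, ← mul_assoc A, hAB, hCA, hBC])⟩

theorem key (hS : IsAmiable S) (hM : AvoidsM S) {a b : S} (ha : a*a = a) (hb : b*b = b)
    (hne : a*b ≠ b*a) : ∀ N : ℕ, ABm a b (N+1) ≠ ABm a b N := by
  intro N
  induction N using Nat.strong_induction_on with
  | _ N IH =>
  intro H
  have hstab : ∀ k, ABm a b (N+k) = ABm a b N := by
    intro k; induction k with
    | zero => rfl
    | succ k ih =>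
        calc ABm a b (N+(k+1)) = ABm a b ((N+k)+1) := by rw [Nat.add_succ]
          _ = ABm a b (N+k) * (a*b) := wm_succ_r _
          _ = ABm a b N * (a*b) := by rw [ih]
          _ = ABm a b (N+1) := (wm_succ_r _).symm
          _ = ABm a b N := H
  have hstab' : ∀ k, N ≤ k → ABm a b k = ABm a b N := by
    intro k hk
    obtain ⟨m, rfl⟩ := Nat.exists_eq_add_of_le hk
    exact hstab m
  have hee : ABm a b N * ABm a b N = ABm a b N := by
    rw [← wm_add]; exact hstab' _ (by omega)
  have hae : a * ABm a b N = ABm a b N := wm_a ha N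
  have heb : ABm a b N * b = ABm a b N := wm_b hb N
  have hea : ABm a b N * a = ABm a b N := ea_of hS hee hae
  have hbe : b * ABm a b N = ABm a b N := be_of hS hee heb
  have hme : ∀ k, ABm a b k * ABm a b N = ABm a b N := by
    intro k; rw [← wm_add]; exact hstab' _ (by omega)
  have hake : ∀ k, ABa a b k * ABm a b N = ABm a b N := by
    intro k; cases k with
    | zero => exact hae
    | succ k => rw [← wm_mul_a, mul_assoc, hae]; exact hme k
  have hb_ne : b ≠ ABm a b N := by
    intro h; apply hne
    calc a*b = a*ABm a b N := by rw [← h]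
      _ = ABm a b N := hae
      _ = ABm a b N * a := hea.symm
      _ = b * a := by rw [← h]
  have ha_ne : a ≠ ABm a b N := by
    intro h; apply hne
    calc a*b = ABm a b N * b := by rw [← h]
      _ = ABm a b N := heb
      _ = b * ABm a b N := hbe.symm
      _ = b*a := by rw [← h]
  rcases N with _ | K
  · -- N = 0 : e = a*b
    have hab : a*b = ABm a b 0 := rfl
    rcases quad hM ha hb hab hae hea hbe heb hee with h|h|h|h|h|h
    · exact hne (by rw [h])
    · exact ha_ne h
    · apply ha_ne
      calc a = a*a := ha.symm
        _ = a*(b*a) := by rw [← h]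
        _ = (a*b)*a := (mul_assoc _ _ _).symm
        _ = ABm a b 0 := hea
    · exact hb_ne h
    · apply hb_ne
      calc b = b*b := hb.symm
        _ = (b*a)*b := by rw [← h]
        _ = b*(a*b) := mul_assoc _ _ _
        _ = ABm a b 0 := hbe
    · exact hne (hab.trans h)
  · -- N = K+1
    -- Step Z : z := ABa a b (K+1) equals e
    have hzb : ABa a b (K+1) * b = ABm a b (K+1) := wa_mul_b _
    have hza : ABa a b (K+1) * a = ABa a b (K+1) := wa_a ha _
    have hze : ABa a b (K+1) * ABm a b (K+1) = ABm a b (K+1) := hake (K+1)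
    obtain ⟨η, ⟨hηE, hηL⟩, -⟩ := hS.1 (ABa a b (K+1))
    have hzη : ABa a b (K+1) * η = ABa a b (K+1) := (lstar_one hηL η).mpr hηE
    have hηa : η * a = η := (lstar_one hηL a).mp hza
    have haη : a * η = η := absorb_swap hS hηE hηa
    have habz : (a*b) * ABa a b (K+1) = ABm a b (K+1) := by
      rw [← wa_succ, ← wm_mul_a, hea]
    have heη : ABm a b (K+1) * η = ABm a b (K+1) := by
      rw [← habz, mul_assoc, hzη]
    have hηe : η * ABm a b (K+1) = ABm a b (K+1) := be_of hS hee heη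
    have hηb : η * b = ABm a b (K+1) := by
      have h := (lstar_iff hηL b (ABm a b (K+1))).mp (by rw [hzb, hze])
      rw [hηe] at h; exact h
    have hz : ABa a b (K+1) = ABm a b (K+1) := by
      rcases quad hM hηE hb hηb hηe heη hbe heb hee with h|h|h|h|h|h
      · rw [← hzη, h]; exact hzb
      · rw [← hzη, h]; exact hze
      · rw [← hzη, h, ← mul_assoc, hzb]; exact heη
      · exact absurd h hb_ne
      · exfalso; apply hb_ne
        calc b = b*b := hb.symm
          _ = (b*η)*b := by rw [← h]
          _ = b*(η*b) := mul_assoc _ _ _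
          _ = b*ABm a b (K+1) := by rw [hηb]
          _ = ABm a b (K+1) := hbe
      · rw [← hzη]
        calc ABa a b (K+1) * η = (ABm a b K * a) * η := by rw [wm_mul_a]
          _ = ABm a b K * (a*η) := mul_assoc _ _ _
          _ = ABm a b K * η := by rw [haη]
          _ = (ABa a b K * b) * η := by rw [wa_mul_b]
          _ = ABa a b K * (b*η) := mul_assoc _ _ _
          _ = ABa a b K * ABm a b (K+1) := by rw [← h]
          _ = ABm a b (K+1) := hake K
    -- Step X : x := ABm a b K equals e
    have hxa : ABm a b K * a = ABm a b (K+1) := by rw [wm_mul_a]; exact hz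
    have hxb : ABm a b K * b = ABm a b K := wm_b hb K
    have hxe : ABm a b K * ABm a b (K+1) = ABm a b (K+1) := hme K
    have habx : (a*b) * ABm a b K = ABm a b (K+1) := (wm_succ K).symm
    obtain ⟨θ, ⟨hθE, hθL⟩, -⟩ := hS.1 (ABm a b K)
    have hxθ : ABm a b K * θ = ABm a b K := (lstar_one hθL θ).mpr hθE
    have hθb : θ * b = θ := (lstar_one hθL b).mp hxb
    have hbθ : b * θ = θ := absorb_swap hS hθE hθb
    have heθ : ABm a b (K+1) * θ = ABm a b (K+1) := by rw [← habx, mul_assoc, hxθ]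
    have hθe : θ * ABm a b (K+1) = ABm a b (K+1) := be_of hS hee heθ
    have hθa : θ * a = ABm a b (K+1) := by
      have h := (lstar_iff hθL a (ABm a b (K+1))).mp (by rw [hxa, hxe])
      rw [hθe] at h; exact h
    have hx : ABm a b K = ABm a b (K+1) := by
      rcases quad hM hθE ha hθa hθe heθ hae hea hee with h|h|h|h|h|h
      · rw [← hxθ, h]; exact hxa
      · rw [← hxθ, h]; exact hxe
      · rw [← hxθ, h, ← mul_assoc, hxa]; exact heθ
      · exact absurd h ha_ne
      · exfalso; apply ha_ne
        calc a = a*a := ha.symm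
          _ = (a*θ)*a := by rw [← h]
          _ = a*(θ*a) := mul_assoc _ _ _
          _ = a*ABm a b (K+1) := by rw [hθa]
          _ = ABm a b (K+1) := hae
      · rw [← hxθ]
        rcases K with _ | K'
        · calc ABm a b 0 * θ = a*(b*θ) := mul_assoc _ _ _
            _ = a*θ := by rw [hbθ]
            _ = ABm a b (0+1) := by rw [← h]
        · calc ABm a b (K'+1) * θ = (ABa a b (K'+1) * b) * θ := by rw [wa_mul_b]
            _ = ABa a b (K'+1) * (b*θ) := mul_assoc _ _ _
            _ = ABa a b (K'+1) * θ := by rw [hbθ]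
            _ = (ABm a b K' * a) * θ := by rw [wm_mul_a]
            _ = ABm a b K' * (a*θ) := mul_assoc _ _ _
            _ = ABm a b K' * ABm a b (K'+1+1) := by rw [← h]
            _ = ABm a b (K'+1+1) := hme K'
    exact IH K (by omega) hx.symm

theorem coll (hS : IsAmiable S) (hM : AvoidsM S) {a b : S} (ha : a*a = a) (hb : b*b = b)
    (hne : a*b ≠ b*a) {p q : ℕ} (hpq : p ≠ q) (h : ABm a b p = ABm a b q) : False := by
  suffices main : ∀ p d : ℕ, ABm a b p = ABm a b (p+d+1) → False by
    rcases Nat.lt_or_ge p q with hlt | hge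
    · obtain ⟨d, rfl⟩ : ∃ d, q = p+d+1 := ⟨q-p-1, by omega⟩
      exact main p d h
    · have hlt : q < p := by omega
      obtain ⟨d, rfl⟩ : ∃ d, p = q+d+1 := ⟨p-q-1, by omega⟩
      exact main q d h.symm
  clear hpq h
  intro p d hpd
  have shift : ∀ m, p ≤ m → ABm a b m = ABm a b (m+d+1) := by
    intro m hm
    rcases Nat.eq_or_lt_of_le hm with rfl | hlt
    · exact hpd
    · obtain ⟨s, rfl⟩ : ∃ s, m = s+p+1 := ⟨m-p-1, by omega⟩
      calc ABm a b (s+p+1) = ABm a b s * ABm a b p := wm_add s p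
        _ = ABm a b s * ABm a b (p+d+1) := by rw [hpd]
        _ = ABm a b (s+(p+d+1)+1) := (wm_add s (p+d+1)).symm
        _ = ABm a b (s+p+1+d+1) := by congr 1; omega
  have iter : ∀ k m, p ≤ m → ABm a b m = ABm a b (m+k*(d+1)) := by
    intro k
    induction k with
    | zero => intro m _; congr 1; omega
    | succ k ih =>
        intro m hm
        calc ABm a b m = ABm a b (m+d+1) := shift m hm
          _ = ABm a b (m+d+1+k*(d+1)) := ih (m+d+1) (by omega)
          _ = ABm a b (m+(k+1)*(d+1)) := by congr 1; ring
  have hpt : p ≤ p*(d+1)+d := by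
    have : p*1 ≤ p*(d+1) := Nat.mul_le_mul_left p (by omega)
    omega
  have hee : ABm a b (p*(d+1)+d) * ABm a b (p*(d+1)+d) = ABm a b (p*(d+1)+d) := by
    rw [← wm_add]
    have h2 : (p*(d+1)+d)+(p*(d+1)+d)+1 = (p*(d+1)+d)+(p+1)*(d+1) := by ring
    rw [h2]
    exact (iter (p+1) _ hpt).symm
  have hea : ABm a b (p*(d+1)+d) * a = ABm a b (p*(d+1)+d) := ea_of hS hee (wm_a ha _)
  have hstep : ABm a b ((p*(d+1)+d)+1) = ABm a b (p*(d+1)+d) := by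
    have h0 : ABm a b ((p*(d+1)+d)+1) = ABm a b (p*(d+1)+d) * ABm a b 0 := wm_add _ 0
    rw [h0]
    show ABm a b (p*(d+1)+d) * (a*b) = ABm a b (p*(d+1)+d)
    rw [← mul_assoc, hea, wm_b hb]
  exact key hS hM ha hb hne _ hstep

section Distinct

variable (hS : IsAmiable S) (hM : AvoidsM S) {a b : S}
variable (ha : a*a = a) (hb : b*b = b) (hne : a*b ≠ b*a)

include hS hM ha hb hne

theorem dCC {m n : ℕ} (hmn : m ≠ n) (h : ABa a b m = ABa a b n) : False := by
  apply coll hS hM ha hb hne hmn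
  rw [← wa_mul_b m, ← wa_mul_b n, h]

theorem dAC {m n : ℕ} (h : ABm a b m = ABa a b n) : False := by
  have h2 : ABm a b m = ABm a b n := by rw [← wm_b hb m, h, wa_mul_b]
  by_cases hmn : m = n
  · subst hmn
    have h3 : ABa a b (m+1) = ABa a b m := by rw [← wm_mul_a, h, wa_a ha]
    exact dCC hS hM ha hb hne (by omega) h3
  · exact coll hS hM ha hb hne hmn h2

theorem dAB {m n : ℕ} (h : ABm a b m = ABm b a n) : False := by
  have h2 : ABm a b m = ABa a b (n+1) := by rw [← wm_a ha m, h, a_mul_wm_ba]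
  exact dAC hS hM ha hb hne h2

theorem dAD {m n : ℕ} (h : ABm a b m = ABa b a n) : False := by
  have h2 : ABm a b m = ABm a b n := by rw [← wm_a ha m, h, a_mul_wa_ba]
  by_cases hmn : m = n
  · subst hmn
    have h3 : ABa b a (m+1) = ABa b a m := by
      rw [← b_mul_wm, h]
      exact wa_head_a hb m
    exact dCC hS hM hb ha (Ne.symm hne) (by omega) h3
  · exact coll hS hM ha hb hne hmn h2

theorem dCD {m n : ℕ} (h : ABa a b m = ABa b a n) : False := by
  have h2 : ABm a b m = ABa b a n := by rw [← wa_mul_b m, h, wa_a hb]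
  exact dAD hS hM ha hb hne h2

theorem pairwise_distinct : Function.Injective (ABm a b) ∧ Function.Injective (ABm b a) ∧
    Function.Injective (ABa a b) ∧ Function.Injective (ABa b a) ∧
    (∀ m n, ABm a b m ≠ ABm b a n) ∧ (∀ m n, ABm a b m ≠ ABa a b n) ∧
    (∀ m n, ABm a b m ≠ ABa b a n) ∧ (∀ m n, ABm b a m ≠ ABa a b n) ∧
    (∀ m n, ABm b a m ≠ ABa b a n) ∧ (∀ m n, ABa a b m ≠ ABa b a n) := by
  have hne' : b*a ≠ a*b := Ne.symm hne
  refine ⟨?_, ?_, ?_, ?_, ?_, ?_, ?_, ?_, ?_, ?_⟩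
  · intro m n h; by_contra hmn; exact coll hS hM ha hb hne hmn h
  · intro m n h; by_contra hmn; exact coll hS hM hb ha hne' hmn h
  · intro m n h; by_contra hmn; exact dCC hS hM ha hb hne hmn h
  · intro m n h; by_contra hmn; exact dCC hS hM hb ha hne' hmn h
  · exact fun m n h => dAB hS hM ha hb hne h
  · exact fun m n h => dAC hS hM ha hb hne h
  · exact fun m n h => dAD hS hM ha hb hne h
  · exact fun m n h => dAD hS hM hb ha hne' h
  · exact fun m n h => dAC hS hM hb ha hne' h
  · exact fun m n h => dCD hS hM ha hb hne h

end Distinct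

end GenF

/-- The elements `(ab)^m, (ba)^m (m ≥ 1)` and `(ab)^n a, (ba)^n b (n ≥ 0)`
are pairwise distinct. -/
def PairwiseDistinctF {S : Type*} [Mul S] (a b : S) : Prop :=
  Function.Injective (ABm a b) ∧ Function.Injective (ABm b a) ∧
  Function.Injective (ABa a b) ∧ Function.Injective (ABa b a) ∧
  (∀ m n, ABm a b m ≠ ABm b a n) ∧ (∀ m n, ABm a b m ≠ ABa a b n) ∧
  (∀ m n, ABm a b m ≠ ABa b a n) ∧ (∀ m n, ABm b a m ≠ ABa a b n) ∧
  (∀ m n, ABm b a m ≠ ABa b a n) ∧ (∀ m n, ABa a b m ≠ ABa b a n)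

/-- The defining relations of the presentation `⟨a, b ∣ a² = a, b² = b⟩`. -/
def FRel : FreeSemigroup (Fin 2) → FreeSemigroup (Fin 2) → Prop := fun x y =>
  (x = FreeSemigroup.of 0 * FreeSemigroup.of 0 ∧ y = FreeSemigroup.of 0) ∨
  (x = FreeSemigroup.of 1 * FreeSemigroup.of 1 ∧ y = FreeSemigroup.of 1)

/-- The semigroup `F` presented by `⟨a, b ∣ a² = a, b² = b⟩`. -/
def FSemigroup : Type := (conGen FRel).Quotient

instance : Semigroup FSemigroup := inferInstanceAs (Semigroup (conGen FRel).Quotient)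

namespace GenF

def swp : Fin 2 → Fin 2 := fun x => if x = 0 then 1 else 0

def alt : Fin 2 → ℕ → FreeSemigroup (Fin 2)
  | x, 0 => FreeSemigroup.of x
  | x, n+1 => FreeSemigroup.of x * alt (swp x) n

def red : Fin 2 → List (Fin 2) → FreeSemigroup (Fin 2)
  | x, [] => FreeSemigroup.of x
  | x, y :: t => if x = y then red x t else FreeSemigroup.of x * red y t

theorem frel_sq (x : Fin 2) :
    (conGen FRel) (FreeSemigroup.of x * FreeSemigroup.of x) (FreeSemigroup.of x) := by
  apply ConGen.Rel.of
  fin_cases x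
  · exact Or.inl ⟨rfl, rfl⟩
  · exact Or.inr ⟨rfl, rfl⟩

theorem red_absorb : ∀ (t : List (Fin 2)) (x : Fin 2),
    (conGen FRel) (FreeSemigroup.of x * red x t) (red x t)
  | [], x => by
      simp only [red]
      exact frel_sq x
  | y :: t, x => by
      by_cases hxy : x = y
      · subst hxy
        simp only [red, if_pos rfl]
        exact red_absorb t x
      · simp only [red, if_neg hxy]
        have h := (conGen FRel).mul (frel_sq x) ((conGen FRel).refl (red y t))
        rw [mul_assoc] at h
        exact h

theorem red_rel : ∀ (t : List (Fin 2)) (x : Fin 2),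
    (conGen FRel) (⟨x, t⟩ : FreeSemigroup (Fin 2)) (red x t)
  | [], x => (conGen FRel).refl _
  | y :: t, x => by
      have hsplit : (⟨x, y :: t⟩ : FreeSemigroup (Fin 2)) = FreeSemigroup.of x * ⟨y, t⟩ := rfl
      rw [hsplit]
      have h1 := (conGen FRel).mul ((conGen FRel).refl (FreeSemigroup.of x)) (red_rel t y)
      by_cases hxy : x = y
      · subst hxy
        have h2 : red x (x :: t) = red x t := by simp [red]
        rw [h2]
        exact (conGen FRel).trans h1 (red_absorb t x)
      · have h2 : red x (y :: t) = FreeSemigroup.of x * red y t := by simp [red, hxy]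
        rw [h2]
        exact h1

theorem swp_ne : ∀ {x y : Fin 2}, x ≠ y → y = swp x := by decide

theorem red_alt : ∀ (t : List (Fin 2)) (x : Fin 2), ∃ n, red x t = alt x n
  | [], x => ⟨0, rfl⟩
  | y :: t, x => by
      by_cases hxy : x = y
      · subst hxy
        obtain ⟨n, hn⟩ := red_alt t x
        exact ⟨n, by simpa [red] using hn⟩
      · obtain ⟨m, hm⟩ := red_alt t y
        refine ⟨m+1, ?_⟩
        have h2 : red x (y :: t) = FreeSemigroup.of x * red y t := by simp [red, hxy]
        rw [h2, hm, swp_ne hxy]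
        rfl

section Eval

variable {S : Type*} [Semigroup S] {a b : S}

/-- values of the two alternating words of length `n+1`. -/
def A2 (a b : S) : ℕ → S × S
  | 0 => (a, b)
  | n+1 => (a * (A2 a b n).2, b * (A2 a b n).1)

variable (φ : FreeSemigroup (Fin 2) →ₙ* S) (h0 : φ (FreeSemigroup.of 0) = a)
    (h1 : φ (FreeSemigroup.of 1) = b)

include h0 h1 in
theorem phi_alt : ∀ n, φ (alt 0 n) = (A2 a b n).1 ∧ φ (alt 1 n) = (A2 a b n).2 := by
  intro n
  induction n with
  | zero => exact ⟨h0, h1⟩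
  | succ n ih =>
      have hs0 : swp 0 = 1 := by decide
      have hs1 : swp 1 = 0 := by decide
      have e0 : alt 0 (n+1) = FreeSemigroup.of 0 * alt 1 n := by rw [alt, hs0]
      have e1 : alt 1 (n+1) = FreeSemigroup.of 1 * alt 0 n := by rw [alt, hs1]
      constructor
      · rw [e0, map_mul, h0, ih.2]; rfl
      · rw [e1, map_mul, h1, ih.1]; rfl

theorem A2_spec : ∀ k, (A2 a b (k+k)).1 = ABa a b k ∧ (A2 a b (k+k)).2 = ABa b a k ∧
    (A2 a b (k+k+1)).1 = ABm a b k ∧ (A2 a b (k+k+1)).2 = ABm b a k := by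
  intro k
  induction k with
  | zero => exact ⟨rfl, rfl, rfl, rfl⟩
  | succ k ih =>
      obtain ⟨e1, e2, e3, e4⟩ := ih
      have i1 : (k+1)+(k+1) = (k+k+1)+1 := by omega
      have i2 : (k+1)+(k+1)+1 = ((k+k+1)+1)+1 := by omega
      have f2 : (A2 a b ((k+k+1)+1)).2 = ABa b a (k+1) := by
        show b * (A2 a b (k+k+1)).1 = _
        rw [e3]; exact b_mul_wm k
      have f1 : (A2 a b ((k+k+1)+1)).1 = ABa a b (k+1) := by
        show a * (A2 a b (k+k+1)).2 = _
        rw [e4]; exact a_mul_wm_ba k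
      refine ⟨?_, ?_, ?_, ?_⟩
      · rw [i1]; exact f1
      · rw [i1]; exact f2
      · rw [i2]
        show a * (A2 a b ((k+k+1)+1)).2 = ABm a b (k+1)
        rw [f2]; exact a_mul_wa_ba (k+1)
      · rw [i2]
        show b * (A2 a b ((k+k+1)+1)).1 = ABm b a (k+1)
        rw [f1]; exact a_mul_wa_ba (a := b) (b := a) (k+1)

include h0 h1 in
theorem alt_val_inj (hS : IsAmiable S) (hM : AvoidsM S) (ha : a*a = a) (hb : b*b = b)
    (hne : a*b ≠ b*a) {x x' : Fin 2} {n n' : ℕ}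
    (h : φ (alt x n) = φ (alt x' n')) : x = x' ∧ n = n' := by
  obtain ⟨i1, i2, i3, i4, d5, d6, d7, d8, d9, d10⟩ := pairwise_distinct hS hM ha hb hne
  have hps := phi_alt φ h0 h1
  have hsp := A2_spec (a := a) (b := b)
  have v0e : ∀ k, φ (alt 0 (k+k)) = ABa a b k := fun k => ((hps (k+k)).1).trans (hsp k).1
  have v1e : ∀ k, φ (alt 1 (k+k)) = ABa b a k := fun k => ((hps (k+k)).2).trans (hsp k).2.1
  have v0o : ∀ k, φ (alt 0 (k+k+1)) = ABm a b k := fun k => ((hps (k+k+1)).1).trans (hsp k).2.2.1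
  have v1o : ∀ k, φ (alt 1 (k+k+1)) = ABm b a k := fun k => ((hps (k+k+1)).2).trans (hsp k).2.2.2
  have hx2 : ∀ y : Fin 2, y = 0 ∨ y = 1 := by decide
  have hpar : ∀ m : ℕ, (∃ k, m = k+k) ∨ (∃ k, m = k+k+1) := by
    intro m
    rcases Nat.even_or_odd m with ⟨k, hk⟩ | ⟨k, hk⟩
    · exact Or.inl ⟨k, hk⟩
    · exact Or.inr ⟨k, by omega⟩
  rcases hx2 x with rfl | rfl <;> rcases hx2 x' with rfl | rfl <;>
    rcases hpar n with ⟨k, rfl⟩ | ⟨k, rfl⟩ <;> rcases hpar n' with ⟨k', rfl⟩ | ⟨k', rfl⟩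
  · rw [v0e k, v0e k'] at h; have := i3 h; exact ⟨rfl, by omega⟩
  · rw [v0e k, v0o k'] at h; exact absurd h.symm (d6 k' k)
  · rw [v0o k, v0e k'] at h; exact absurd h (d6 k k')
  · rw [v0o k, v0o k'] at h; have := i1 h; exact ⟨rfl, by omega⟩
  · rw [v0e k, v1e k'] at h; exact absurd h (d10 k k')
  · rw [v0e k, v1o k'] at h; exact absurd h.symm (d8 k' k)
  · rw [v0o k, v1e k'] at h; exact absurd h (d7 k k')
  · rw [v0o k, v1o k'] at h; exact absurd h (d5 k k')
  · rw [v1e k, v0e k'] at h; exact absurd h.symm (d10 k' k)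
  · rw [v1e k, v0o k'] at h; exact absurd h.symm (d7 k' k)
  · rw [v1o k, v0e k'] at h; exact absurd h (d8 k k')
  · rw [v1o k, v0o k'] at h; exact absurd h.symm (d5 k' k)
  · rw [v1e k, v1e k'] at h; have := i4 h; exact ⟨rfl, by omega⟩
  · rw [v1e k, v1o k'] at h; exact absurd h.symm (d9 k' k)
  · rw [v1o k, v1e k'] at h; exact absurd h (d9 k k')
  · rw [v1o k, v1o k'] at h; have := i2 h; exact ⟨rfl, by omega⟩

end Eval

def mulKer {M N : Type*} [Mul M] [Mul N] (g : M →ₙ* N) : Con M where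
  r := fun u v => g u = g v
  iseqv := ⟨fun _ => rfl, Eq.symm, Eq.trans⟩
  mul' := fun {w x y z} h1 h2 => by
    show g (w*y) = g (x*z)
    rw [map_mul, map_mul]
    show g w * g y = g x * g z
    rw [show g w = g x from h1, show g y = g z from h2]

end GenF


/-- If `a, b` are noncommuting idempotents of an amiable semigroup avoiding `M`,
then the elements `(ab)^m, (ba)^m (m ≥ 1)`, `(ab)^n a, (ba)^n b (n ≥ 0)` are
pairwise distinct; hence the subsemigroup generated by `a` and `b` is infinite
and isomorphic to `F = ⟨a, b ∣ a² = a, b² = b⟩`. -/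
theorem generates_copy_of_F {S : Type*} [Semigroup S] (hS : IsAmiable S) (hM : AvoidsM S)
    (a b : S) (ha : a * a = a) (hb : b * b = b) (hne : a * b ≠ b * a) :
    PairwiseDistinctF a b ∧
    Infinite (Subsemigroup.closure ({a, b} : Set S)) ∧
    Nonempty (FSemigroup ≃* (Subsemigroup.closure ({a, b} : Set S))) := by
  classical
  obtain ⟨i1, i2, i3, i4, d5, d6, d7, d8, d9, d10⟩ := GenF.pairwise_distinct hS hM ha hb hne
  have haC : a ∈ Subsemigroup.closure ({a, b} : Set S) :=
    Subsemigroup.subset_closure (Set.mem_insert _ _)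
  have hbC : b ∈ Subsemigroup.closure ({a, b} : Set S) :=
    Subsemigroup.subset_closure (Set.mem_insert_of_mem _ rfl)
  have hmem : ∀ n, ABm a b n ∈ Subsemigroup.closure ({a, b} : Set S) := by
    intro n; induction n with
    | zero => exact mul_mem haC hbC
    | succ n ih => exact mul_mem (mul_mem haC hbC) ih
  refine ⟨⟨i1, i2, i3, i4, d5, d6, d7, d8, d9, d10⟩, ?_, ?_⟩
  · exact Infinite.of_injective
      (fun n => (⟨ABm a b n, hmem n⟩ : Subsemigroup.closure ({a, b} : Set S)))
      (fun m n h => i1 (congrArg Subtype.val h))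
  · let f : Fin 2 → (Subsemigroup.closure ({a, b} : Set S)) := ![⟨a, haC⟩, ⟨b, hbC⟩]
    let φ : FreeSemigroup (Fin 2) →ₙ* (Subsemigroup.closure ({a, b} : Set S)) :=
      FreeSemigroup.lift f
    let ψ : FreeSemigroup (Fin 2) →ₙ* S :=
      (MulMemClass.subtype (Subsemigroup.closure ({a, b} : Set S))).comp φ
    have h0 : ψ (FreeSemigroup.of 0) = a := by simp [ψ, φ, f]
    have h1 : ψ (FreeSemigroup.of 1) = b := by simp [ψ, φ, f]
    have hbase : ∀ x y, FRel x y → (GenF.mulKer φ) x y := by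
      rintro x y (⟨rfl, rfl⟩ | ⟨rfl, rfl⟩)
      · show φ _ = φ _
        rw [map_mul]
        apply Subtype.ext
        show ψ (FreeSemigroup.of 0) * ψ (FreeSemigroup.of 0) = ψ (FreeSemigroup.of 0)
        rw [h0]; exact ha
      · show φ _ = φ _
        rw [map_mul]
        apply Subtype.ext
        show ψ (FreeSemigroup.of 1) * ψ (FreeSemigroup.of 1) = ψ (FreeSemigroup.of 1)
        rw [h1]; exact hb
    have hker : ∀ u v, (conGen FRel) u v → φ u = φ v := fun u v huv =>
      Con.le_def.mp (Con.conGen_le.mpr hbase) huv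
    have hwinj : ∀ u v : FreeSemigroup (Fin 2), φ u = φ v → (conGen FRel) u v := by
      intro u v huv
      obtain ⟨nu, hnu⟩ := GenF.red_alt u.tail u.head
      obtain ⟨nv, hnv⟩ := GenF.red_alt v.tail v.head
      have hu : (conGen FRel) u (GenF.alt u.head nu) := by
        have h := GenF.red_rel u.tail u.head
        rw [hnu] at h
        exact h
      have hv : (conGen FRel) v (GenF.alt v.head nv) := by
        have h := GenF.red_rel v.tail v.head
        rw [hnv] at h
        exact h
      have hval : ψ (GenF.alt u.head nu) = ψ (GenF.alt v.head nv) := by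
        show ((φ (GenF.alt u.head nu) : Subsemigroup.closure ({a, b} : Set S)) : S)
          = ((φ (GenF.alt v.head nv) : Subsemigroup.closure ({a, b} : Set S)) : S)
        rw [← hker _ _ hu, ← hker _ _ hv, huv]
      obtain ⟨hx, hn⟩ := GenF.alt_val_inj ψ h0 h1 hS hM ha hb hne hval
      rw [← hx, ← hn] at hv
      exact (conGen FRel).trans hu ((conGen FRel).symm hv)
    let Φ : FSemigroup →ₙ* (Subsemigroup.closure ({a, b} : Set S)) :=
      { toFun := fun q => Con.liftOn q ⇑φ hker,
        map_mul' := fun q r => Con.induction_on₂ q r (fun u v => by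
          show φ (u*v) = φ u * φ v
          exact map_mul φ u v) }
    have hΦinj : Function.Injective Φ := by
      intro q r
      refine Con.induction_on₂ q r ?_
      intro u v h
      have h' : φ u = φ v := h
      exact (Con.eq _).mpr (hwinj u v h')
    have hΦsurj : Function.Surjective Φ := by
      rintro ⟨s, hs⟩
      have hex : ∃ w : FreeSemigroup (Fin 2), ψ w = s := by
        refine Subsemigroup.closure_induction ?_ ?_ hs
        · rintro x (rfl | rfl)
          · exact ⟨FreeSemigroup.of 0, h0⟩
          · exact ⟨FreeSemigroup.of 1, h1⟩
        · rintro x y _ _ ⟨w1, hw1⟩ ⟨w2, hw2⟩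
          exact ⟨w1*w2, by rw [map_mul, hw1, hw2]⟩
      obtain ⟨w, hw⟩ := hex
      exact ⟨(↑w : (conGen FRel).Quotient), Subtype.ext hw⟩
    exact ⟨MulEquiv.ofBijective Φ ⟨hΦinj, hΦsurj⟩⟩
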